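/- Fix μ ∈ ℝ, σ > 0, c ∈ ℝ, τ > 0 and q ∈ ℝ. Then δ² · (1 - F(δ, τ, q; μ, σ, c - δ)) tends to 0 as δ tends to +∞; i.e., when the ostracism threshold is lowered to c - δ, the probability that the agent's reputation hits c - δ before time δ is eventually smaller than 1/δ². -/

import Mathlib

open Real MeasureTheory Filter Topology

/-- Standard normal density φ(x) = exp(-x²/2)/√(2π). -/
noncomputable def stdPdf (x : ℝ) : ℝ := Real.exp (-(x ^ 2) / 2) / Real.sqrt (2 * Real.pi)

/-- Standard normal CDF Φ(x) = ∫_{-∞}^x φ(u) du. -/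
noncomputable def stdCdf (x : ℝ) : ℝ := ∫ u in Set.Iio x, stdPdf u

lemma stdPdf_eq (x : ℝ) : stdPdf x = Real.exp (-((1:ℝ)/2) * x ^ 2) / Real.sqrt (2 * Real.pi) := by
  unfold stdPdf; ring_nf

lemma stdPdf_nonneg (x : ℝ) : 0 ≤ stdPdf x :=
  div_nonneg (Real.exp_nonneg _) (Real.sqrt_nonneg _)

lemma integrable_stdPdf : Integrable stdPdf := by
  have h := (integrable_exp_neg_mul_sq (by norm_num : (0:ℝ) < 1/2)).div_const (Real.sqrt (2 * Real.pi))
  exact h.congr (Filter.Eventually.of_forall fun x => by rw [stdPdf_eq])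

lemma integral_stdPdf : ∫ x, stdPdf x = 1 := by
  have h : ∫ x : ℝ, Real.exp (-((1:ℝ)/2) * x ^ 2) = Real.sqrt (Real.pi / (1/2)) :=
    integral_gaussian (1/2)
  have : ∫ x, stdPdf x = (∫ x : ℝ, Real.exp (-((1:ℝ)/2) * x ^ 2)) / Real.sqrt (2 * Real.pi) := by
    rw [← integral_div]; congr 1; ext x; rw [stdPdf_eq]
  rw [this, h]
  rw [div_eq_one_iff_eq (by positivity)]
  congr 1; ring

lemma stdCdf_nonneg (x : ℝ) : 0 ≤ stdCdf x :=
  setIntegral_nonneg measurableSet_Iio (fun u _ => stdPdf_nonneg u)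

lemma tail_eq (x : ℝ) : 1 - stdCdf x = ∫ u in Set.Ioi x, stdPdf u := by
  have h := intervalIntegral.integral_Iio_add_Ici (b := x) (μ := volume)
    (integrable_stdPdf.integrableOn) (integrable_stdPdf.integrableOn)
  rw [integral_stdPdf] at h
  rw [← integral_Ici_eq_integral_Ioi]
  unfold stdCdf
  linarith

lemma stdCdf_le_one (x : ℝ) : stdCdf x ≤ 1 := by
  have h := tail_eq x
  have : 0 ≤ ∫ u in Set.Ioi x, stdPdf u :=
    setIntegral_nonneg measurableSet_Ioi (fun u _ => stdPdf_nonneg u)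
  linarith

lemma integral_mul_stdPdf_Ioi (x : ℝ) :
    ∫ u in Set.Ioi x, u * stdPdf u = Real.exp (-(x ^ 2) / 2) / Real.sqrt (2 * Real.pi) := by
  have sqpos : (0:ℝ) < Real.sqrt (2 * Real.pi) := by positivity
  have hint : IntegrableOn (fun u : ℝ => u * stdPdf u) (Set.Ioi x) := by
    have h := ((integrable_mul_exp_neg_mul_sq (by norm_num : (0:ℝ) < 1/2)).div_const
      (Real.sqrt (2 * Real.pi)))
    refine (h.congr (Filter.Eventually.of_forall fun u => ?_)).integrableOn
    simp only [stdPdf_eq]; ring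
  have hderiv : ∀ u ∈ Set.Ici x,
      HasDerivAt (fun u : ℝ => -Real.exp (-(u ^ 2) / 2) / Real.sqrt (2 * Real.pi))
        (u * stdPdf u) u := by
    intro u _
    have h1 : HasDerivAt (fun u : ℝ => -(u ^ 2) / 2) (-u) u := by
      have := ((hasDerivAt_pow 2 u).neg).div_const 2
      exact this.congr_deriv (by push_cast; ring)
    have h2 := (Real.hasDerivAt_exp _).comp u h1
    have h3 := (h2.neg).div_const (Real.sqrt (2 * Real.pi))
    refine h3.congr_deriv ?_
    simp only [stdPdf, Function.comp]
    field_simp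
  have hlim : Tendsto (fun u : ℝ => -Real.exp (-(u ^ 2) / 2) / Real.sqrt (2 * Real.pi))
      atTop (𝓝 0) := by
    have h1 : Tendsto (fun u : ℝ => -(u ^ 2) / 2) atTop atBot := by
      apply Tendsto.atBot_div_const (by norm_num)
      exact tendsto_neg_atBot_iff.mpr (tendsto_pow_atTop (by norm_num : 2 ≠ 0))
    have h2 := Real.tendsto_exp_atBot.comp h1
    have := (h2.neg).div_const (Real.sqrt (2 * Real.pi))
    simpa using this
  have := integral_Ioi_of_hasDerivAt_of_tendsto' hderiv hint hlim
  rw [this]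
  field_simp
  ring

lemma tail_le (x : ℝ) (hx : 1 ≤ x) : 1 - stdCdf x ≤ Real.exp (-(x ^ 2) / 2) := by
  rw [tail_eq]
  have sqge : (1:ℝ) ≤ Real.sqrt (2 * Real.pi) := by
    rw [show (1:ℝ) = Real.sqrt 1 by simp]
    apply Real.sqrt_le_sqrt
    nlinarith [Real.pi_gt_three]
  have h1 : ∫ u in Set.Ioi x, stdPdf u ≤ ∫ u in Set.Ioi x, u * stdPdf u := by
    apply setIntegral_mono_on
    · exact integrable_stdPdf.integrableOn
    · have h := ((integrable_mul_exp_neg_mul_sq (by norm_num : (0:ℝ) < 1/2)).div_const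
        (Real.sqrt (2 * Real.pi)))
      refine (h.congr (Filter.Eventually.of_forall fun u => ?_)).integrableOn
      simp only [stdPdf_eq]; ring
    · exact measurableSet_Ioi
    · intro u hu
      have : 1 ≤ u := le_trans hx (le_of_lt hu)
      nlinarith [stdPdf_nonneg u]
  rw [integral_mul_stdPdf_Ioi] at h1
  have h2 : Real.exp (-(x ^ 2) / 2) / Real.sqrt (2 * Real.pi) ≤ Real.exp (-(x ^ 2) / 2) := by
    apply div_le_self (Real.exp_nonneg _) sqge
  linarith

/-- Survival probability F(t, τ, q; μ, σ, c): the probability that the agent's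
reputation does not hit the cost c before time t, given true quality q. -/
noncomputable def survF (t τ q μ σ c : ℝ) : ℝ :=
  stdCdf (Real.sqrt (t * τ) * (q - c) + (μ - c) / (σ ^ 2 * Real.sqrt (t * τ)))
    - Real.exp (-(2 / σ ^ 2) * (μ - c) * (q - c)) *
      stdCdf (Real.sqrt (t * τ) * (q - c) - (μ - c) / (σ ^ 2 * Real.sqrt (t * τ)))

/-- δ²·(1 - F(δ, τ, q; μ, σ, c - δ)) → 0 as δ → ∞. -/
theorem stmt_17 (μ σ c τ q : ℝ) (hσ : 0 < σ) (hτ : 0 < τ) :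
    Tendsto (fun δ : ℝ => δ ^ 2 * (1 - survF δ τ q μ σ (c - δ))) atTop (𝓝 0) := by
  have hlim : Tendsto (fun δ : ℝ => 2 * (δ ^ 2 * Real.exp (-δ))) atTop (𝓝 0) := by
    have h := (tendsto_pow_mul_exp_neg_atTop_nhds_zero 2).const_mul 2
    simpa using h
  refine tendsto_of_tendsto_of_tendsto_of_le_of_le' tendsto_const_nhds hlim ?_ ?_
  · -- lower bound: eventually 0 ≤ f δ
    filter_upwards [eventually_ge_atTop (0:ℝ)] with δ hδ
    have h1 := stdCdf_le_one (Real.sqrt (δ * τ) * (q - (c - δ))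
      + (μ - (c - δ)) / (σ ^ 2 * Real.sqrt (δ * τ)))
    have h2 := stdCdf_nonneg (Real.sqrt (δ * τ) * (q - (c - δ))
      - (μ - (c - δ)) / (σ ^ 2 * Real.sqrt (δ * τ)))
    have h3 := Real.exp_nonneg (-(2 / σ ^ 2) * (μ - (c - δ)) * (q - (c - δ)))
    unfold survF
    nlinarith [sq_nonneg δ, mul_nonneg h3 h2]
  · -- upper bound
    filter_upwards [eventually_ge_atTop (2:ℝ), eventually_ge_atTop (4/τ),
      eventually_ge_atTop (2*(c-q)), eventually_ge_atTop (2*(c-μ)),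
      eventually_ge_atTop (2*σ^2)] with δ h1 h2 h3 h4 h5
    have hδ0 : (0:ℝ) < δ := by linarith
    set s := Real.sqrt (δ * τ) with hs
    have hs2 : (2:ℝ) ≤ s := by
      rw [hs, show (2:ℝ) = Real.sqrt 4 by
        rw [show (4:ℝ) = 2^2 by norm_num, Real.sqrt_sq (by norm_num)]]
      exact Real.sqrt_le_sqrt ((div_le_iff₀ hτ).mp h2)
    have hq : δ / 2 ≤ q - (c - δ) := by linarith
    have hm : δ / 2 ≤ μ - (c - δ) := by linarith
    have hσ2 : (0:ℝ) < σ ^ 2 := by positivity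
    set A := s * (q - (c - δ)) + (μ - (c - δ)) / (σ ^ 2 * s) with hA
    have hA_ge : δ ≤ A := by
      have ht1 : δ ≤ s * (q - (c - δ)) := by nlinarith
      have ht2 : (0:ℝ) ≤ (μ - (c - δ)) / (σ ^ 2 * s) := by
        apply div_nonneg (by linarith) (by positivity)
      rw [hA]; linarith
    have hA1 : (1:ℝ) ≤ A := by linarith
    clear_value s A
    -- tail bound for first term
    have htail : 1 - stdCdf A ≤ Real.exp (-δ) := by
      have h := tail_le A hA1
      have : Real.exp (-(A ^ 2) / 2) ≤ Real.exp (-δ) := by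
        apply Real.exp_le_exp.mpr
        have hAA : δ ^ 2 ≤ A ^ 2 := by nlinarith [sq_nonneg (A - δ)]
        have h2δ : 2 * δ ≤ δ ^ 2 := by nlinarith
        linarith
      linarith
    -- exponential term bound
    have hexp : Real.exp (-(2 / σ ^ 2) * (μ - (c - δ)) * (q - (c - δ))) ≤ Real.exp (-δ) := by
      apply Real.exp_le_exp.mpr
      have hprod : δ/2 * (δ/2) ≤ (μ - (c - δ)) * (q - (c - δ)) := by nlinarith
      have h2σ : (0:ℝ) < 2 / σ ^ 2 := by positivity
      have : 2 / σ ^ 2 * (δ/2 * (δ/2)) ≤ 2 / σ ^ 2 * ((μ - (c - δ)) * (q - (c - δ))) :=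
        mul_le_mul_of_nonneg_left hprod h2σ.le
      have hkey : δ ≤ 2 / σ ^ 2 * (δ/2 * (δ/2)) := by
        rw [div_mul_eq_mul_div, le_div_iff₀ hσ2]
        nlinarith
      nlinarith
    have hCle := stdCdf_le_one (s * (q - (c - δ)) - (μ - (c - δ)) / (σ ^ 2 * s))
    have hCge := stdCdf_nonneg (s * (q - (c - δ)) - (μ - (c - δ)) / (σ ^ 2 * s))
    have hexp0 := Real.exp_nonneg (-(2 / σ ^ 2) * (μ - (c - δ)) * (q - (c - δ)))
    have key : 1 - survF δ τ q μ σ (c - δ) ≤ 2 * Real.exp (-δ) := by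
      unfold survF
      rw [← hs, ← hA]
      nlinarith
    calc δ ^ 2 * (1 - survF δ τ q μ σ (c - δ)) ≤ δ ^ 2 * (2 * Real.exp (-δ)) := by
          apply mul_le_mul_of_nonneg_left key (by positivity)
      _ = 2 * (δ ^ 2 * Real.exp (-δ)) := by ring
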